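/- Let λ ≥ 2 and m ≥ 1 be integers and let n ≥ 1. Then the Lebesgue measure of the set {x ∈ [0,1) : for every i with 0 ≤ i ≤ n−1, the fractional part of λ^i·x is at least λ^{−m}} is at most (1 − λ^{−m})^{n/m} ≤ exp(−λ^{−m}·n/m). -/

import Mathlib

open MeasureTheory Pointwise
open scoped ENNReal

lemma fract_nat_mul_fract (c : ℕ) (z : ℝ) :
    Int.fract ((c : ℝ) * Int.fract z) = Int.fract ((c : ℝ) * z) := by
  have h : (c : ℝ) * Int.fract z = (c : ℝ) * z - ((c * ⌊z⌋ : ℤ) : ℝ) := by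
    rw [Int.fract]
    push_cast
    ring
  rw [h, Int.fract_sub_intCast]

lemma vol_S_le (l m : ℕ) (hl : 2 ≤ l) (hm : 1 ≤ m) :
    ∀ k : ℕ, volume {x : ℝ | x ∈ Set.Ico (0 : ℝ) 1 ∧
        ∀ j : ℕ, j < k → ((l : ℝ) ^ m)⁻¹ ≤ Int.fract ((l : ℝ) ^ (j * m) * x)}
      ≤ ENNReal.ofReal (1 - ((l : ℝ) ^ m)⁻¹) ^ k := by
  have hl0 : (0 : ℝ) < (l : ℝ) := by positivity
  have hL0 : (0 : ℝ) < (l : ℝ) ^ m := by positivity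
  intro k
  induction k with
  | zero =>
      simp only [pow_zero]
      calc volume {x : ℝ | x ∈ Set.Ico (0 : ℝ) 1 ∧
            ∀ j : ℕ, j < 0 → ((l : ℝ) ^ m)⁻¹ ≤ Int.fract ((l : ℝ) ^ (j * m) * x)}
          ≤ volume (Set.Ico (0 : ℝ) 1) := measure_mono (fun x hx => hx.1)
        _ = 1 := by simp
  | succ k ih =>
      set L : ℝ := (l : ℝ) ^ m with hLdef
      set S : ℕ → Set ℝ := fun k => {x : ℝ | x ∈ Set.Ico (0 : ℝ) 1 ∧
        ∀ j : ℕ, j < k → L⁻¹ ≤ Int.fract ((l : ℝ) ^ (j * m) * x)} with hSdef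
      have hsub : S (k + 1) ⊆
          ⋃ a ∈ Finset.Ico 1 (l ^ m), (fun y : ℝ => ((a : ℝ) + y) / L) '' S k := by
        intro x hx
        obtain ⟨⟨hx0, hx1⟩, hcond⟩ := hx
        have hLx0 : 0 ≤ L * x := by positivity
        have hLx1 : L * x < L := by
          nlinarith
        set a : ℤ := ⌊L * x⌋ with ha
        have ha0 : 0 ≤ a := Int.floor_nonneg.2 hLx0
        have haL : a < ((l ^ m : ℕ) : ℤ) := by
          rw [ha, Int.floor_lt]
          push_cast
          exact hLx1
        have hx_eps : L⁻¹ ≤ x := by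
          have := hcond 0 (Nat.succ_pos k)
          simpa [Int.fract_eq_self.2 ⟨hx0, hx1⟩] using this
        have ha1 : 1 ≤ a := by
          rw [ha]
          rw [Int.le_floor]
          push_cast
          calc (1 : ℝ) = L * L⁻¹ := by field_simp
            _ ≤ L * x := by
              apply mul_le_mul_of_nonneg_left hx_eps (le_of_lt hL0)
        set y : ℝ := Int.fract (L * x) with hy
        have hyS : y ∈ S k := by
          refine ⟨⟨Int.fract_nonneg _, Int.fract_lt_one _⟩, ?_⟩
          intro j hj
          have key : Int.fract ((l : ℝ) ^ (j * m) * y) =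
              Int.fract ((l : ℝ) ^ ((j + 1) * m) * x) := by
            rw [hy]
            have := fract_nat_mul_fract (l ^ (j * m)) (L * x)
            push_cast at this
            rw [this]
            congr 1
            rw [hLdef]
            rw [← mul_assoc, ← pow_add]
            congr 2
            ring
          rw [key]
          exact hcond (j + 1) (by omega)
        have hfract : y = L * x - (a : ℝ) := by rw [hy, ha, Int.fract]
        have hxval : x = ((a : ℝ) + y) / L := by
          rw [hfract]
          field_simp
          ring
        refine Set.mem_biUnion (show a.toNat ∈ Finset.Ico 1 (l ^ m) by
          simp only [Finset.mem_Ico]; omega) ⟨y, hyS, ?_⟩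
        have hcast : ((a.toNat : ℕ) : ℝ) = (a : ℝ) := by
          exact_mod_cast Int.toNat_of_nonneg ha0
        simp only
        rw [hcast, ← hxval]
      show volume (S (k + 1)) ≤ ENNReal.ofReal (1 - L⁻¹) ^ (k + 1)
      calc volume (S (k + 1))
          ≤ ∑ a ∈ Finset.Ico 1 (l ^ m),
              volume ((fun y : ℝ => ((a : ℝ) + y) / L) '' S k) :=
            le_trans (measure_mono hsub) (measure_biUnion_finset_le _ _)
        _ ≤ ∑ a ∈ Finset.Ico 1 (l ^ m),
              ENNReal.ofReal L⁻¹ * volume (S k) := by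
            apply Finset.sum_le_sum
            intro a _
            have himg : (fun y : ℝ => ((a : ℝ) + y) / L) '' S k =
                ((a : ℝ) / L) +ᵥ (L⁻¹ • S k) := by
              ext z
              simp only [Set.mem_image, Set.mem_vadd_set, Set.mem_smul_set, vadd_eq_add]
              constructor
              · rintro ⟨y, hy, rfl⟩
                exact ⟨L⁻¹ * y, ⟨y, hy, rfl⟩, by field_simp⟩
              · rintro ⟨w, ⟨y, hy, rfl⟩, rfl⟩
                exact ⟨y, hy, by rw [smul_eq_mul]; field_simp⟩
            rw [himg, measure_vadd, Measure.addHaar_smul_of_nonneg volume (by positivity)]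
            simp
        _ = ((l ^ m - 1 : ℕ) : ℝ≥0∞) * (ENNReal.ofReal L⁻¹ * volume (S k)) := by
            rw [Finset.sum_const, Nat.card_Ico, nsmul_eq_mul]
        _ ≤ ((l ^ m - 1 : ℕ) : ℝ≥0∞) * (ENNReal.ofReal L⁻¹ * ENNReal.ofReal (1 - L⁻¹) ^ k) := by
            gcongr
        _ = ENNReal.ofReal (1 - L⁻¹) ^ (k + 1) := by
            rw [pow_succ]
            have hlm1 : 1 ≤ l ^ m := Nat.one_le_pow _ _ (by omega)
            have : ((l ^ m - 1 : ℕ) : ℝ≥0∞) * ENNReal.ofReal L⁻¹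
                = ENNReal.ofReal (1 - L⁻¹) := by
              rw [← ENNReal.ofReal_natCast, ← ENNReal.ofReal_mul (by positivity)]
              congr 1
              rw [Nat.cast_sub hlm1]
              push_cast
              field_simp
              rfl
            rw [← mul_assoc, this, mul_comm]

theorem measure_no_small_fract (l m : ℕ) (hl : 2 ≤ l) (hm : 1 ≤ m) (n : ℕ) (hn : 1 ≤ n) :
    volume {x : ℝ | x ∈ Set.Ico (0 : ℝ) 1 ∧
        ∀ i : ℕ, i < n → (l : ℝ) ^ (-(m : ℤ)) ≤ Int.fract ((l : ℝ) ^ i * x)}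
      ≤ ENNReal.ofReal ((1 - (l : ℝ) ^ (-(m : ℤ))) ^ ((n : ℝ) / m)) ∧
    (1 - (l : ℝ) ^ (-(m : ℤ))) ^ ((n : ℝ) / m)
      ≤ Real.exp (-(l : ℝ) ^ (-(m : ℤ)) * n / m) := by
  have heps : (l : ℝ) ^ (-(m : ℤ)) = ((l : ℝ) ^ m)⁻¹ := by
    rw [zpow_neg, zpow_natCast]
  have hl0 : (0 : ℝ) < (l : ℝ) := by positivity
  have hL0 : (0 : ℝ) < (l : ℝ) ^ m := by positivity
  have hl1 : (1 : ℝ) ≤ (l : ℝ) := by exact_mod_cast Nat.one_le_of_lt hl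
  have hL2 : (2 : ℝ) ≤ (l : ℝ) ^ m := by
    calc (2 : ℝ) ≤ (l : ℝ) := by exact_mod_cast hl
      _ = (l : ℝ) ^ 1 := (pow_one _).symm
      _ ≤ (l : ℝ) ^ m := pow_le_pow_right₀ hl1 hm
  have heps0 : (0 : ℝ) < ((l : ℝ) ^ m)⁻¹ := by positivity
  have heps1 : ((l : ℝ) ^ m)⁻¹ ≤ 1 / 2 := by
    rw [one_div]
    exact inv_anti₀ (by norm_num) hL2
  have h1e0 : (0 : ℝ) < 1 - ((l : ℝ) ^ m)⁻¹ := by linarith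
  have h1e1 : 1 - ((l : ℝ) ^ m)⁻¹ < 1 := by linarith
  set k : ℕ := (n - 1) / m + 1 with hk
  have hkm : n ≤ k * m := by
    have h1 := Nat.div_add_mod' (n - 1) m
    have h2 : (n - 1) % m < m := Nat.mod_lt _ (by omega)
    rw [hk, add_mul, one_mul]
    set q := (n - 1) / m * m
    set r := (n - 1) % m
    omega
  -- first part
  constructor
  · have hsub : {x : ℝ | x ∈ Set.Ico (0 : ℝ) 1 ∧
        ∀ i : ℕ, i < n → (l : ℝ) ^ (-(m : ℤ)) ≤ Int.fract ((l : ℝ) ^ i * x)} ⊆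
        {x : ℝ | x ∈ Set.Ico (0 : ℝ) 1 ∧
        ∀ j : ℕ, j < k → ((l : ℝ) ^ m)⁻¹ ≤ Int.fract ((l : ℝ) ^ (j * m) * x)} := by
      intro x hx
      refine ⟨hx.1, fun j hj => ?_⟩
      rw [← heps]
      apply hx.2
      have hj' : j ≤ (n - 1) / m := by omega
      have := Nat.div_mul_le_self (n - 1) m
      calc j * m ≤ (n - 1) / m * m := Nat.mul_le_mul_right m hj'
        _ ≤ n - 1 := this
        _ < n := by omega
    refine le_trans (measure_mono hsub) (le_trans (vol_S_le l m hl hm k) ?_)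
    rw [← ENNReal.ofReal_pow (by linarith)]
    apply ENNReal.ofReal_le_ofReal
    rw [heps]
    calc (1 - ((l : ℝ) ^ m)⁻¹) ^ k = (1 - ((l : ℝ) ^ m)⁻¹) ^ (k : ℝ) := by
          rw [Real.rpow_natCast]
      _ ≤ (1 - ((l : ℝ) ^ m)⁻¹) ^ ((n : ℝ) / m) := by
          apply Real.rpow_le_rpow_of_exponent_ge h1e0 (le_of_lt h1e1)
          rw [div_le_iff₀ (by positivity : (0 : ℝ) < (m : ℝ))]
          exact_mod_cast hkm
  · rw [heps]
    have h1 : 1 - ((l : ℝ) ^ m)⁻¹ ≤ Real.exp (-((l : ℝ) ^ m)⁻¹) := by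
      have := Real.add_one_le_exp (-((l : ℝ) ^ m)⁻¹)
      linarith
    calc (1 - ((l : ℝ) ^ m)⁻¹) ^ ((n : ℝ) / m)
        ≤ Real.exp (-((l : ℝ) ^ m)⁻¹) ^ ((n : ℝ) / m) :=
          Real.rpow_le_rpow (le_of_lt h1e0) h1 (by positivity)
      _ = Real.exp (-((l : ℝ) ^ m)⁻¹ * n / m) := by
          rw [← Real.exp_mul]
          congr 1
          ring
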